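/- Let T be a finite tree with ℓ leaves that has at least one non-leaf vertex. Then the number of linear orders on the vertex set of T that are single-peaked on T is at least ℓ!. -/

import Mathlib

/-- `x` appears strictly before `y` in the list `l`. -/
def listBefore {V : Type*} (l : List V) (x y : V) : Prop :=
  ∃ i j : Fin l.length, i < j ∧ l.get i = x ∧ l.get j = y

/-- The restriction of `r` to the finite set `X` is single peaked with respect to the
restriction of `r'` to `X`. -/
def SinglePeakedOn {V : Type*} (X : Finset V) (r r' : V → V → Prop) : Prop :=
  ∀ p ∈ X, (∀ x ∈ X, x ≠ p → r p x) →
    ∀ x ∈ X, ∀ y ∈ X, ((r' p x ∧ r' x y) ∨ (r' y x ∧ r' x p)) → r x y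

/-- A linear order `r` on the vertex set of `G` is single peaked on the tree `G`. -/
def SinglePeakedOnTree {V : Type*} [DecidableEq V] (G : SimpleGraph V)
    (r : V → V → Prop) : Prop :=
  ∀ l : List V, l.Nodup → l.Chain' G.Adj →
    SinglePeakedOn l.toFinset r (listBefore l)

-- auxiliary development
section LB
variable {V : Type*} [DecidableEq V]
set_option linter.unusedSectionVars false

theorem lb_iff {L : List V} (hnd : L.Nodup) {x y : V} (hx : x ∈ L) (hy : y ∈ L) :
    listBefore L x y ↔ L.idxOf x < L.idxOf y := by
  constructor
  · rintro ⟨i, j, hij, hxi, hyj⟩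
    have hi : i = ⟨L.idxOf x, List.idxOf_lt_length_iff.2 hx⟩ := by
      rw [← hnd.get_inj_iff, hxi, List.idxOf_get]
    have hj : j = ⟨L.idxOf y, List.idxOf_lt_length_iff.2 hy⟩ := by
      rw [← hnd.get_inj_iff, hyj, List.idxOf_get]
    rw [hi, hj] at hij
    exact hij
  · intro h
    exact ⟨⟨L.idxOf x, List.idxOf_lt_length_iff.2 hx⟩, ⟨L.idxOf y, List.idxOf_lt_length_iff.2 hy⟩,
      h, List.idxOf_get _, List.idxOf_get _⟩

theorem lb_append_left {L M : List V} {x y : V} (h : listBefore L x y) :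
    listBefore (L ++ M) x y := by
  obtain ⟨i, j, hij, hx, hy⟩ := h
  refine ⟨⟨i, ?_⟩, ⟨j, ?_⟩, hij, ?_, ?_⟩
  · simp [List.length_append]; omega
  · simp [List.length_append]; omega
  · simpa [List.get_eq_getElem, List.getElem_append_left] using hx
  · simpa [List.get_eq_getElem, List.getElem_append_left] using hy

theorem lb_append_cross {L M : List V} {x y : V} (hx : x ∈ L) (hy : y ∈ M) :
    listBefore (L ++ M) x y := by
  obtain ⟨i, hi, hxi⟩ := List.getElem_of_mem hx
  obtain ⟨j, hj, hyj⟩ := List.getElem_of_mem hy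
  refine ⟨⟨i, ?_⟩, ⟨L.length + j, ?_⟩, ?_, ?_, ?_⟩
  · simp [List.length_append]; omega
  · simp [List.length_append]; omega
  · simp; omega
  · simp only [List.get_eq_getElem]
    rw [List.getElem_append_left]; exact hxi
  · simp only [List.get_eq_getElem]
    rw [List.getElem_append_right (by omega)]
    simpa using hyj

theorem lb_reverse_of {l : List V} {x y : V} (h : listBefore l x y) :
    listBefore l.reverse y x := by
  obtain ⟨i, j, hij, hx, hy⟩ := h
  refine ⟨⟨l.length - 1 - j, ?_⟩, ⟨l.length - 1 - i, ?_⟩, ?_, ?_, ?_⟩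
  · simp; omega
  · simp; omega
  · simp only [Fin.mk_lt_mk]; omega
  · simp only [List.get_eq_getElem, List.getElem_reverse]
    have : l.length - 1 - (l.length - 1 - (j:ℕ)) = j := by omega
    simp only [this]; exact hy
  · simp only [List.get_eq_getElem, List.getElem_reverse]
    have : l.length - 1 - (l.length - 1 - (i:ℕ)) = i := by omega
    simp only [this]; exact hx

end LB

section Graph
variable {V : Type*} [DecidableEq V] {G : SimpleGraph V}
set_option linter.unusedSectionVars false

/-- Every pair of vertices in `s` is joined by a walk staying in `s`. -/
def SubConn (G : SimpleGraph V) (s : Finset V) : Prop :=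
  ∀ u ∈ s, ∀ v ∈ s, ∃ w : G.Walk u v, ∀ x ∈ w.support, x ∈ s

/-- turn a chain into a walk -/
theorem chain_toWalk : ∀ (c : List V) (a b : V), List.Chain' G.Adj (a :: c) →
    (a :: c).getLast? = some b → ∃ w : G.Walk a b, w.support = a :: c := by
  intro c
  induction c with
  | nil =>
    intro a b _ hlast
    simp at hlast
    subst hlast
    exact ⟨SimpleGraph.Walk.nil, rfl⟩
  | cons d c ih =>
    intro a b hch hlast
    rw [List.Chain', List.isChain_cons_cons] at hch
    rw [List.getLast?_cons_cons] at hlast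
    obtain ⟨w', hw'⟩ := ih d b hch.2 hlast
    exact ⟨SimpleGraph.Walk.cons hch.1 w', by simp [hw']⟩

/-- walk along a chain staying in a prefix -/
theorem chain_walk_take : ∀ (M : List V) (w : V), List.Chain' G.Adj (w :: M) →
    ∀ k, ∀ v ∈ M.take k, ∃ wlk : G.Walk w v, ∀ x ∈ wlk.support, x ∈ w :: M.take k := by
  intro M
  induction M with
  | nil => intro w _ k v hv; simp at hv
  | cons a M ih =>
    intro w hch k v hv
    rw [List.Chain', List.isChain_cons_cons] at hch
    cases k with
    | zero => simp at hv
    | succ k =>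
      simp only [List.take_succ_cons, List.mem_cons] at hv
      rcases hv with rfl | hv
      · exact ⟨.cons hch.1 .nil, by simp⟩
      · obtain ⟨wlk, hwlk⟩ := ih a hch.2 k v hv
        refine ⟨.cons hch.1 wlk, ?_⟩
        intro x hx
        simp only [SimpleGraph.Walk.support_cons, List.mem_cons] at hx
        rcases hx with rfl | hx
        · simp
        · have := hwlk x hx
          simp only [List.take_succ_cons, List.mem_cons] at this ⊢
          tauto

theorem degree_ne_one_of_two_adj [Fintype V] [DecidableRel G.Adj] {x a b : V}
    (ha : G.Adj x a) (hb : G.Adj x b) (hab : a ≠ b) : G.degree x ≠ 1 := by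
  have h2 : 2 ≤ G.degree x := by
    rw [← SimpleGraph.card_neighborFinset_eq_degree]
    apply Finset.one_lt_card.2
    exact ⟨a, by simpa using ha, b, by simpa using hb, hab⟩
  omega

/-- interior vertices of a path are not leaves -/
theorem not_leaf_of_interior [Fintype V] [DecidableRel G.Adj] :
    ∀ (M : List V) (w : V), List.Chain' G.Adj (w :: M) → (w :: M).Nodup →
      ∀ x ∈ M.dropLast, G.degree x ≠ 1 := by
  intro M
  induction M with
  | nil => intro w _ _ x hx; simp at hx
  | cons a M ih =>
    intro w hch hnd x hx
    cases M with
    | nil => simp at hx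
    | cons b M' =>
      rw [List.dropLast_cons₂, List.mem_cons] at hx
      rw [List.Chain', List.isChain_cons_cons] at hch
      rcases hx with rfl | hx
      · have hadj2 : G.Adj x b := (List.isChain_cons_cons.1 hch.2).1
        have hwb : w ≠ b := by
          intro h; subst h
          simp [List.nodup_cons] at hnd
        exact degree_ne_one_of_two_adj hch.1.symm hadj2 hwb
      · exact ih a hch.2 (hnd.of_cons) x hx

end Graph

section Graph3
variable {V : Type*} [DecidableEq V] {G : SimpleGraph V}
set_option linter.unusedSectionVars false
set_option maxHeartbeats 1000000

theorem walk_support_getLast? {u v : V} (w : G.Walk u v) : w.support.getLast? = some v := by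
  rw [← List.head?_reverse, ← SimpleGraph.Walk.support_reverse]
  rw [w.reverse.support_eq_cons]
  rfl

theorem ext_step [Fintype V] [DecidableRel G.Adj] (hT : G.IsTree) {L : List V}
    (hne : L ≠ []) (t : V) (ht : t ∉ L) :
    ∃ (M : List V) (w : V), w ∈ L ∧ M ≠ [] ∧ M.Nodup ∧ (∀ x ∈ M, x ∉ L) ∧
      List.Chain' G.Adj (w :: M) ∧ M.getLast? = some t ∧
      (∀ x ∈ M, G.degree x = 1 → x = t) := by
  classical
  set u := L.head hne with hu_def
  have hu : u ∈ L := List.head_mem hne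
  have hr : G.Reachable u t := hT.isConnected.preconnected u t
  set π : G.Path u t := hr.some.toPath with hπ
  set s : List V := (π : G.Walk u t).support with hs
  have hsnd : s.Nodup := π.2.support_nodup
  have hsch : List.Chain' G.Adj s := SimpleGraph.Walk.isChain_adj_support _
  have hshead : s.head? = some u := by rw [hs, (π : G.Walk u t).support_eq_cons]; rfl
  have hslast : s.getLast? = some t := walk_support_getLast? _
  set p : V → Bool := fun x => decide (x ∉ L) with hp
  set M : List V := (s.reverse.takeWhile p).reverse with hM
  set pre : List V := (s.reverse.dropWhile p).reverse with hpre
  have hdecomp : s = pre ++ M := by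
    rw [hpre, hM, ← List.reverse_append, List.takeWhile_append_dropWhile, List.reverse_reverse]
  have hM_not_L : ∀ x ∈ M, x ∉ L := by
    intro x hx
    have := List.mem_takeWhile_imp (List.mem_reverse.1 (by rwa [← List.reverse_reverse M] at hx))
    simpa [hp] using this
  have hrevhead : s.reverse.head? = some t := by rw [List.head?_reverse]; exact hslast
  obtain ⟨tail, htail⟩ : ∃ tail, s.reverse = t :: tail := by
    cases hsr : s.reverse with
    | nil => rw [hsr] at hrevhead; simp at hrevhead
    | cons a tl => rw [hsr] at hrevhead; simp at hrevhead; exact ⟨tl, by rw [hrevhead]⟩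
  have hpt : p t = true := by simp [hp, ht]
  have hMlast : M.getLast? = some t := by
    rw [hM, List.getLast?_reverse, htail, List.takeWhile_cons_of_pos hpt]
    rfl
  have hMne : M ≠ [] := by
    intro h; rw [h] at hMlast; simp at hMlast
  have hpre_ne : pre ≠ [] := by
    intro h
    rw [h, List.nil_append] at hdecomp
    have : u ∈ M := by
      rw [← hdecomp]
      exact List.mem_of_mem_head? hshead
    exact hM_not_L u this hu
  set w : V := pre.getLast hpre_ne with hw_def
  have hw : w ∈ L := by
    have hdw : s.reverse.dropWhile p ≠ [] := by
      intro h; rw [hpre, h] at hpre_ne; simp at hpre_ne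
    have hfail : p ((s.reverse.dropWhile p).head hdw) = false := List.head_dropWhile_not p hdw
    have heq : w = (s.reverse.dropWhile p).head hdw := by
      have := List.getLast_reverse (l := s.reverse.dropWhile p) (by rw [← hpre]; exact hpre_ne)
      rw [hw_def]
      simp only [hpre]
      rw [this]
    rw [heq]
    simpa [hp] using hfail
  have hch := List.isChain_append.1 (hdecomp ▸ hsch)
  have hMnd : M.Nodup := by
    rw [hdecomp] at hsnd
    exact (List.nodup_append.1 hsnd).2.1
  have hadj : ∀ y ∈ M.head?, G.Adj w y := by
    intro y hy
    exact hch.2.2 w (by rw [List.getLast?_eq_getLast (l := pre) hpre_ne]; rfl) y hy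
  have hchwM : List.Chain' G.Adj (w :: M) := List.isChain_cons.2 ⟨hadj, hch.2.1⟩
  refine ⟨M, w, hw, hMne, hMnd, hM_not_L, hchwM, hMlast, ?_⟩
  intro x hx hdeg
  have hndwM : (w :: M).Nodup := by
    rw [List.nodup_cons]
    exact ⟨fun h => hM_not_L w h hw, hMnd⟩
  have hnl := not_leaf_of_interior M w hchwM hndwM
  have hsplit : M.dropLast ++ [M.getLast hMne] = M := List.dropLast_append_getLast hMne
  have hgl : M.getLast hMne = t := by
    rw [List.getLast?_eq_getLast (l := M) hMne] at hMlast
    simpa using hMlast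
  rw [← hsplit] at hx
  rcases List.mem_append.1 hx with h | h
  · exact absurd hdeg (hnl x h)
  · simp at h; rw [h, hgl]
end Graph3
section Graph2
variable {V : Type*} [DecidableEq V] {G : SimpleGraph V}
set_option linter.unusedSectionVars false

def GoodL (G : SimpleGraph V) (L : List V) : Prop :=
  L ≠ [] ∧ L.Nodup ∧ ∀ n, SubConn G ((L.take n).toFinset)

theorem good_singleton (v : V) : GoodL G [v] := by
  refine ⟨by simp, by simp, fun n => ?_⟩
  intro a ha b hb
  cases n with
  | zero => simp at ha
  | succ n =>
    simp at ha hb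
    subst ha; subst hb
    exact ⟨SimpleGraph.Walk.nil, by simp⟩

theorem good_ext {L M : List V} {w : V} (hG : GoodL G L) (hw : w ∈ L)
    (hMnd : M.Nodup) (hdisj : ∀ x ∈ M, x ∉ L) (hch : List.Chain' G.Adj (w :: M)) :
    GoodL G (L ++ M) := by
  obtain ⟨hne, hnd, hsc⟩ := hG
  have hscL : SubConn G L.toFinset := by
    have := hsc L.length
    rwa [List.take_length] at this
  refine ⟨by simp [hne], hnd.append hMnd (fun a ha hb => hdisj a hb ha), fun n => ?_⟩
  by_cases hn : n ≤ L.length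
  · rw [List.take_append_of_le_length hn]
    exact hsc n
  · rw [List.take_append, List.take_of_length_le (by omega), List.toFinset_append]
    set k := n - L.length
    set S : Finset V := L.toFinset ∪ (M.take k).toFinset with hS
    have hwS : w ∈ S := by simp [hS, hw]
    have HC : ∀ v ∈ S, ∃ wlk : G.Walk w v, ∀ x ∈ wlk.support, x ∈ S := by
      intro v hv
      rcases Finset.mem_union.1 hv with hv | hv
      · obtain ⟨wlk, hwlk⟩ := hscL w (by simpa using hw) v hv
        exact ⟨wlk, fun x hx => Finset.mem_union_left _ (hwlk x hx)⟩
      · obtain ⟨wlk, hwlk⟩ := chain_walk_take M w hch k v (by simpa using hv)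
        refine ⟨wlk, fun x hx => ?_⟩
        rcases List.mem_cons.1 (hwlk x hx) with h | h
        · exact Finset.mem_union_left _ (by simp [h, hw])
        · exact Finset.mem_union_right _ (by simpa using h)
    intro a ha b hb
    obtain ⟨wa, hwa⟩ := HC a ha
    obtain ⟨wb, hwb⟩ := HC b hb
    refine ⟨wa.reverse.append wb, fun x hx => ?_⟩
    rw [SimpleGraph.Walk.support_append] at hx
    rcases List.mem_append.1 hx with h | h
    · rw [SimpleGraph.Walk.support_reverse, List.mem_reverse] at h
      exact hwa x h
    · exact hwb x (List.mem_of_mem_tail h)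
end Graph2
section SPOT
variable {V : Type*} [DecidableEq V] {G : SimpleGraph V}
set_option linter.unusedSectionVars false

theorem indexOf_lt_of_mem_take {L : List V} {x : V} {n : ℕ} (h : x ∈ L.take n) :
    L.idxOf x < n :=
  calc L.idxOf x = (L.take n ++ L.drop n).idxOf x := by rw [List.take_append_drop]
    _ = (L.take n).idxOf x := List.idxOf_append_of_mem h
    _ < (L.take n).length := List.idxOf_lt_length_iff.2 h
    _ ≤ n := by simp [List.length_take]

theorem mem_take_of_indexOf_lt {L : List V} {x : V} {n : ℕ} (hx : x ∈ L)
    (h : L.idxOf x < n) : x ∈ L.take n := by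
  have hlen : L.idxOf x < L.length := List.idxOf_lt_length_iff.2 hx
  have hlt : L.idxOf x < (L.take n).length := by simp [List.length_take]; omega
  have heq : (L.take n)[L.idxOf x] = x := by
    rw [List.getElem_take]; exact List.getElem_idxOf hlen
  exact heq ▸ List.getElem_mem hlt

theorem spot_claim (hT : G.IsTree) {L : List V} (hnd : L.Nodup) (hall : ∀ v, v ∈ L)
    (hsc : ∀ n, SubConn G ((L.take n).toFinset)) {l : List V} (hlnd : l.Nodup)
    (hlch : l.Chain' G.Adj) {p x y : V}
    (hpeak : ∀ z ∈ l.toFinset, z ≠ p → listBefore L p z)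
    (h1 : listBefore l p x) (h2 : listBefore l x y) : listBefore L x y := by
  classical
  obtain ⟨i0, i1a, h01, hgp, hgx1⟩ := h1
  obtain ⟨i1, i2, h12, hgx, hgy⟩ := h2
  have hi1 : i1a = i1 := hlnd.get_inj_iff.1 (hgx1.trans hgx.symm)
  rw [hi1] at h01
  have hpx_ne : x ≠ p := by
    intro h
    have := hlnd.get_inj_iff.1 (hgx.trans (h ▸ hgp).symm)
    rw [this] at h01; exact lt_irrefl _ h01
  have hxy_ne : x ≠ y := by
    intro h
    have := hlnd.get_inj_iff.1 (hgx.trans (h ▸ hgy).symm)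
    rw [this] at h12; exact lt_irrefl _ h12
  have hxl : x ∈ l := by rw [← hgx]; exact l.get_mem _
  have hpx : listBefore L p x := hpeak x (by simpa using hxl) hpx_ne
  rw [lb_iff hnd (hall p) (hall x)] at hpx
  rw [lb_iff hnd (hall x) (hall y)]
  by_contra hcon
  push_neg at hcon
  have hidxne : L.idxOf y ≠ L.idxOf x := by
    intro h
    apply hxy_ne
    have h1' := List.getElem_idxOf (List.idxOf_lt_length_iff.2 (hall x))
    have h2' := List.getElem_idxOf (List.idxOf_lt_length_iff.2 (hall y))
    rw [← h1', ← h2']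
    simp [h]
  have hyx : L.idxOf y < L.idxOf x := lt_of_le_of_ne hcon hidxne
  set n := L.idxOf x with hn
  have hyP : y ∈ (L.take n).toFinset := by
    rw [List.mem_toFinset]; exact mem_take_of_indexOf_lt (hall y) hyx
  have hpP : p ∈ (L.take n).toFinset := by
    rw [List.mem_toFinset]; exact mem_take_of_indexOf_lt (hall p) hpx
  have hxP : x ∉ (L.take n).toFinset := by
    rw [List.mem_toFinset]
    intro h
    exact lt_irrefl n (indexOf_lt_of_mem_take h)
  obtain ⟨W, hW⟩ := hsc n p hpP y hyP
  -- construct the subpath of l from p to y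
  set sg : List V := (l.drop (i0 : ℕ)).take ((i2 : ℕ) - (i0 : ℕ) + 1) with hc
  have hi2l : (i2 : ℕ) < l.length := i2.isLt
  have hclen : sg.length = (i2 : ℕ) - (i0 : ℕ) + 1 := by
    simp only [hc, List.length_take, List.length_drop]
    have h02 : (i0 : ℕ) < (i2 : ℕ) := h01.trans h12
    omega
  have hcne : sg ≠ [] := by
    intro h; rw [h] at hclen; simp at hclen
  have hcsub : sg.Sublist l :=
    ((List.take_prefix _ _).sublist).trans ((List.drop_suffix _ _).sublist)
  have hcnd : sg.Nodup := hlnd.sublist hcsub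
  have hcch : sg.Chain' G.Adj := (hlch.suffix (List.drop_suffix _ _)).prefix (List.take_prefix _ _)
  have hgetc : ∀ (j : ℕ) (hj : j < sg.length) (hj2 : (i0 : ℕ) + j < l.length),
      sg[j] = l[(i0 : ℕ) + j] := by
    intro j hj hj2
    simp only [hc]
    rw [List.getElem_take, List.getElem_drop]
  have hchead : sg.head hcne = p := by
    rw [List.head_eq_getElem, hgetc 0 (by omega) (by omega)]
    simpa using (List.get_eq_getElem (l := l) (i := i0) ▸ hgp)
  have hclast : sg.getLast hcne = y := by
    rw [List.getLast_eq_getElem, hgetc (sg.length - 1) (by omega) (by rw [hclen]; omega)]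
    have harith : (i0 : ℕ) + (sg.length - 1) = (i2 : ℕ) := by
      rw [hclen]
      have h02 : (i0 : ℕ) < (i2 : ℕ) := h01.trans h12
      omega
    simp only [harith]
    simpa using (List.get_eq_getElem (l := l) (i := i2) ▸ hgy)
  have hxc : x ∈ sg := by
    have hj : (i1 : ℕ) - (i0 : ℕ) < sg.length := by rw [hclen]; omega
    have : sg[(i1 : ℕ) - (i0 : ℕ)] = x := by
      rw [hgetc _ hj (by omega)]
      have harith : (i0 : ℕ) + ((i1 : ℕ) - (i0 : ℕ)) = (i1 : ℕ) := by omega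
      simp only [harith]
      simpa using (List.get_eq_getElem (l := l) (i := i1) ▸ hgx)
    exact this ▸ List.getElem_mem hj
  have hc3 : sg = p :: sg.tail := by
    conv_lhs => rw [← List.cons_head_tail hcne]
    rw [hchead]
  obtain ⟨W2, hW2sup⟩ := chain_toWalk sg.tail p y (hc3 ▸ hcch)
    (by rw [← hc3, List.getLast?_eq_getLast (l := sg) hcne, hclast])
  have hW2path : W2.IsPath := by
    rw [SimpleGraph.Walk.isPath_def, hW2sup, ← hc3]; exact hcnd
  have huniq := hT.existsUnique_path p y
  have heqW : W2 = (W.toPath : G.Walk p y) := huniq.unique hW2path W.toPath.isPath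
  apply hxP
  apply hW
  apply SimpleGraph.Walk.support_toPath_subset
  rw [← heqW, hW2sup, ← hc3]
  exact hxc

theorem spot_of_good (hT : G.IsTree) {L : List V} (hnd : L.Nodup) (hall : ∀ v, v ∈ L)
    (hsc : ∀ n, SubConn G ((L.take n).toFinset)) : SinglePeakedOnTree G (listBefore L) := by
  intro l hlnd hlch p hp hpeak x hx y hy hcase
  rcases hcase with ⟨h1, h2⟩ | ⟨h1, h2⟩
  · exact spot_claim hT hnd hall hsc hlnd hlch hpeak h1 h2
  · have hlnd' : l.reverse.Nodup := by simpa using hlnd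
    have hlch' : l.reverse.Chain' G.Adj := by
      rw [List.Chain', List.isChain_reverse]
      exact List.IsChain.imp (fun a b h => h.symm) hlch
    have hpeak' : ∀ z ∈ l.reverse.toFinset, z ≠ p → listBefore L p z := by
      simpa [List.toFinset_reverse] using hpeak
    exact spot_claim hT hnd hall hsc hlnd' hlch' hpeak' (lb_reverse_of h2) (lb_reverse_of h1)

theorem sto_of {L : List V} (hnd : L.Nodup) (hall : ∀ v, v ∈ L) :
    IsStrictTotalOrder V (listBefore L) := by
  have hiff : ∀ x y, listBefore L x y ↔ L.idxOf x < L.idxOf y :=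
    fun x y => lb_iff hnd (hall x) (hall y)
  refine { trichotomous := ?_, irrefl := ?_, trans := ?_ }
  · intro x y hnxy hnyx
    rcases lt_trichotomy (L.idxOf x) (L.idxOf y) with h | h | h
    · exact absurd ((hiff x y).2 h) hnxy
    · have h1' := List.getElem_idxOf (List.idxOf_lt_length_iff.2 (hall x))
      have h2' := List.getElem_idxOf (List.idxOf_lt_length_iff.2 (hall y))
      rw [← h1', ← h2']
      simp [h]
    · exact absurd ((hiff y x).2 h) hnyx
  · intro x h
    exact lt_irrefl _ ((hiff x x).1 h)
  · intro x y z hxy hyz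
    exact (hiff x z).2 (lt_trans ((hiff x y).1 hxy) ((hiff y z).1 hyz))
end SPOT
section Phases
variable {V : Type*} [Fintype V] [DecidableEq V] {G : SimpleGraph V} [DecidableRel G.Adj]
set_option linter.unusedSectionVars false

theorem phase1 (hT : G.IsTree) {v0 : V} (hv0 : G.degree v0 ≠ 1)
    {ℓ : ℕ} (σ : Fin ℓ ≃ {v // v ∈ Finset.univ.filter fun v => G.degree v = 1}) :
    ∀ k, k ≤ ℓ → ∃ L : List V, GoodL G L ∧
      (∀ i : Fin ℓ, (i : ℕ) < k → (σ i : V) ∈ L) ∧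
      (∀ x ∈ L, G.degree x = 1 → ∃ i : Fin ℓ, (i : ℕ) < k ∧ x = (σ i : V)) ∧
      (∀ i j : Fin ℓ, (i : ℕ) < k → (j : ℕ) < k → i < j →
        listBefore L (σ i : V) (σ j : V)) := by
  intro k
  induction k with
  | zero =>
    intro _
    exact ⟨[v0], good_singleton v0, fun i hi => by omega,
      fun x hx hdeg => by simp at hx; rw [hx] at hdeg; exact absurd hdeg hv0,
      fun i j hi hj hij => by omega⟩
  | succ k ih =>
    intro hk1
    obtain ⟨L, hG, ha, hb, hc⟩ := ih (by omega)
    set ik : Fin ℓ := ⟨k, by omega⟩ with hik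
    set t : V := (σ ik : V) with htdef
    have htleaf : G.degree t = 1 := by
      have := (σ ik).2
      simp only [Finset.mem_filter] at this
      exact this.2
    have ht : t ∉ L := by
      intro h
      obtain ⟨i, hikk, heq⟩ := hb t h htleaf
      have : σ ik = σ i := Subtype.ext heq
      have : ik = i := σ.injective this
      rw [← this] at hikk
      simp [hik] at hikk
    obtain ⟨M, w, hw, hMne, hMnd, hdisj, hch, hMlast, hMleaf⟩ := ext_step hT hG.1 t ht
    have htM : t ∈ M := by
      rw [List.getLast?_eq_getLast (l := M) hMne] at hMlast
      have := Option.some_injective _ hMlast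
      rw [← this]
      exact List.getLast_mem hMne
    refine ⟨L ++ M, good_ext hG hw hMnd hdisj hch, ?_, ?_, ?_⟩
    · intro i hi
      rcases Nat.lt_succ_iff_lt_or_eq.1 hi with h | h
      · exact List.mem_append_left _ (ha i h)
      · have : i = ik := Fin.ext h
        rw [this, ← htdef]
        exact List.mem_append_right _ htM
    · intro x hx hdeg
      rcases List.mem_append.1 hx with h | h
      · obtain ⟨i, hi, he⟩ := hb x h hdeg
        exact ⟨i, by omega, he⟩
      · exact ⟨ik, by simp [hik], hMleaf x h hdeg⟩
    · intro i j hi hj hij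
      rcases Nat.lt_succ_iff_lt_or_eq.1 hj with h | h
      · exact lb_append_left (hc i j (by omega) h hij)
      · have hji : j = ik := Fin.ext h
        have hik' : (i : ℕ) < k := by
          have := hij
          rw [hji] at this
          simpa [hik, Fin.lt_def] using this
        rw [hji, ← htdef]
        exact lb_append_cross (ha i hik') htM

theorem phase2 (hT : G.IsTree) :
    ∀ (n : ℕ) (L : List V), GoodL G L → (Finset.univ.filter (· ∉ L)).card ≤ n →
      ∃ L', GoodL G L' ∧ (∃ M, L' = L ++ M) ∧ ∀ v : V, v ∈ L' := by
  intro n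
  induction n with
  | zero =>
    intro L hG hcard
    refine ⟨L, hG, ⟨[], by simp⟩, fun v => ?_⟩
    by_contra hv
    have : v ∈ Finset.univ.filter (· ∉ L) := by simp [hv]
    rw [Finset.card_eq_zero.1 (Nat.le_zero.1 hcard)] at this
    simp at this
  | succ n ih =>
    intro L hG hcard
    by_cases hallv : ∀ v : V, v ∈ L
    · exact ⟨L, hG, ⟨[], by simp⟩, hallv⟩
    · push_neg at hallv
      obtain ⟨t, ht⟩ := hallv
      obtain ⟨M, w, hw, hMne, hMnd, hdisj, hch, hMlast, _⟩ := ext_step hT hG.1 t ht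
      have htM : t ∈ M := by
        rw [List.getLast?_eq_getLast (l := M) hMne] at hMlast
        have := Option.some_injective _ hMlast
        rw [← this]
        exact List.getLast_mem hMne
      have hG2 : GoodL G (L ++ M) := good_ext hG hw hMnd hdisj hch
      have hsub : Finset.univ.filter (· ∉ L ++ M) ⊆ (Finset.univ.filter (· ∉ L)).erase t := by
        intro v hv
        simp only [Finset.mem_filter, Finset.mem_univ, true_and, List.mem_append,
          Finset.mem_erase] at hv ⊢
        push_neg at hv
        exact ⟨fun h => hv.2 (h ▸ htM), hv.1⟩
      have hcard2 : (Finset.univ.filter (· ∉ L ++ M)).card ≤ n := by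
        have h1 := Finset.card_le_card hsub
        have h2 : ((Finset.univ.filter (· ∉ L)).erase t).card
            = (Finset.univ.filter (· ∉ L)).card - 1 :=
          Finset.card_erase_of_mem (by simp [ht])
        omega
      obtain ⟨L', hG', ⟨M2, hM2⟩, hall⟩ := ih (L ++ M) hG2 hcard2
      exact ⟨L', hG', ⟨M ++ M2, by rw [hM2, List.append_assoc]⟩, hall⟩

theorem main_exists (hT : G.IsTree) {v0 : V} (hv0 : G.degree v0 ≠ 1)
    {ℓ : ℕ} (σ : Fin ℓ ≃ {v // v ∈ Finset.univ.filter fun v => G.degree v = 1}) :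
    ∃ L : List V, L.Nodup ∧ (∀ v, v ∈ L) ∧ (∀ n, SubConn G ((L.take n).toFinset)) ∧
      (∀ i j : Fin ℓ, i < j → listBefore L (σ i : V) (σ j : V)) := by
  obtain ⟨L, hG, ha, hb, hc⟩ := phase1 hT hv0 σ ℓ le_rfl
  obtain ⟨L', hG', ⟨M, hM⟩, hall⟩ := phase2 hT _ L hG le_rfl
  refine ⟨L', hG'.2.1, hall, hG'.2.2, fun i j hij => ?_⟩
  rw [hM]
  exact lb_append_left (hc i j i.isLt j.isLt hij)

end Phases

/-- For a finite tree with `ℓ` leaves having at least one non-leaf vertex, the number of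
linear orders on its vertex set that are single peaked on it is at least `ℓ!`. -/
theorem singlePeaked_count_ge_factorial_leaves
    {V : Type*} [Fintype V] [DecidableEq V] (G : SimpleGraph V) [DecidableRel G.Adj]
    (hT : G.IsTree) (hnonleaf : ∃ v : V, G.degree v ≠ 1)
    (ℓ : ℕ) (hℓ : (Finset.univ.filter fun v => G.degree v = 1).card = ℓ) :
    Nat.factorial ℓ ≤
      Nat.card {r : V → V → Prop //
        IsStrictTotalOrder V r ∧ SinglePeakedOnTree G r} := by
  classical
  obtain ⟨v0, hv0⟩ := hnonleaf
  set f : (Fin ℓ ≃ {v // v ∈ Finset.univ.filter fun v => G.degree v = 1}) →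
      {r : V → V → Prop // IsStrictTotalOrder V r ∧ SinglePeakedOnTree G r} := fun σ =>
    ⟨listBefore (main_exists hT hv0 σ).choose,
      sto_of (main_exists hT hv0 σ).choose_spec.1 (main_exists hT hv0 σ).choose_spec.2.1,
      spot_of_good hT (main_exists hT hv0 σ).choose_spec.1
        (main_exists hT hv0 σ).choose_spec.2.1 (main_exists hT hv0 σ).choose_spec.2.2.1⟩
    with hf
  have hinj : Function.Injective f := by
    intro σ σ' heq
    by_contra hne
    have hex : ∃ n : ℕ, ∃ h : n < ℓ, σ ⟨n, h⟩ ≠ σ' ⟨n, h⟩ := by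
      by_contra hs
      push_neg at hs
      exact hne (Equiv.ext fun x => hs x.1 x.2)
    set k := Nat.find hex with hk_def
    obtain ⟨hkl, hkne⟩ := Nat.find_spec hex
    set i : Fin ℓ := ⟨k, hkl⟩ with hi_def
    have hmin' : ∀ (m : ℕ) (h : m < ℓ), m < k → σ ⟨m, h⟩ = σ' ⟨m, h⟩ := by
      intro m h hmk
      by_contra hcon
      exact Nat.find_min hex hmk ⟨h, hcon⟩
    set a := σ i with ha_def
    set b := σ' i with hb_def
    have hab : a ≠ b := hkne
    set i1 := σ'.symm a with hi1_def
    have hσ'i1 : σ' i1 = a := σ'.apply_symm_apply a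
    have hii1 : i < i1 := by
      rcases lt_trichotomy i1 i with h | h | h
      · exfalso
        have h1 : (i1 : ℕ) < k := h
        have hth := hmin' i1 i1.isLt h1
        have h2 : σ i1 = a := hth.trans hσ'i1
        have heqi : i1 = i := σ.injective (h2.trans ha_def)
        rw [heqi] at h; exact lt_irrefl _ h
      · exfalso
        rw [h] at hσ'i1
        exact hab (hσ'i1.symm.trans hb_def.symm)
      · exact h
    set j1 := σ.symm b with hj1_def
    have hσj1 : σ j1 = b := σ.apply_symm_apply b
    have hij1 : i < j1 := by
      rcases lt_trichotomy j1 i with h | h | h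
      · exfalso
        have h1 : (j1 : ℕ) < k := h
        have hth := hmin' j1 j1.isLt h1
        have h2 : σ' j1 = b := hth.symm.trans hσj1
        have heqi : j1 = i := σ'.injective (h2.trans hb_def)
        rw [heqi] at h; exact lt_irrefl _ h
      · exfalso
        rw [h] at hσj1
        exact hab (ha_def.trans hσj1)
      · exact h
    have hordσ := (main_exists hT hv0 σ).choose_spec.2.2.2 i j1 hij1
    have hordσ' := (main_exists hT hv0 σ').choose_spec.2.2.2 i i1 hii1
    rw [hσj1] at hordσ
    rw [hσ'i1, ← hb_def] at hordσ'
    have hreq : listBefore (main_exists hT hv0 σ).choose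
        = listBefore (main_exists hT hv0 σ').choose := congrArg Subtype.val heq
    rw [← hreq] at hordσ'
    have hsto := sto_of (main_exists hT hv0 σ).choose_spec.1
      (main_exists hT hv0 σ).choose_spec.2.1
    haveI := hsto
    exact (irrefl_of (listBefore (main_exists hT hv0 σ).choose) (a : V))
      (trans_of _ hordσ hordσ')
  haveI hfin : Finite {r : V → V → Prop // IsStrictTotalOrder V r ∧ SinglePeakedOnTree G r} := by
    have : Finite (V → V → Prop) := inferInstance
    exact Subtype.finite
  have e2 : Fin ℓ ≃ {v // v ∈ Finset.univ.filter fun v => G.degree v = 1} :=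
    (finCongr hℓ.symm).trans (Finset.univ.filter fun v => G.degree v = 1).equivFin.symm
  calc Nat.factorial ℓ
      = Nat.card (Fin ℓ ≃ {v // v ∈ Finset.univ.filter fun v => G.degree v = 1}) := by
        rw [Nat.card_eq_fintype_card, Fintype.card_equiv e2, Fintype.card_fin]
    _ ≤ _ := Nat.card_le_card_of_injective f hinj
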